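/- (Planar separator theorem for disk-packing graphs.) Let n ≥ 1 and let D₀, …, D_{n-1} be pairwise interior-disjoint closed disks in the Euclidean plane with positive radii, and let G be the simple graph on Fin n in which distinct i, j are adjacent if and only if D_i ∩ D_j ≠ ∅. Then there exists a set S of at most 4·√n vertices of G such that every connected component of the induced subgraph of G on the complement of S has at most (9/10)·n vertices. -/

import Mathlib

set_option maxHeartbeats 1600000

open Metric Real Finset MeasureTheory
open scoped Classical

namespace PlanarSepAux

noncomputable abbrev E2 := EuclideanSpace ℝ (Fin 2)

lemma e2_finrank : Module.finrank ℝ E2 = 2 := by simp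

lemma q_lt_one : 2 * Real.sqrt 2 / 3 < 1 := by
  have h : Real.sqrt 2 < 3/2 := (Real.sqrt_lt' (by norm_num)).mpr (by norm_num)
  linarith

lemma grid1 (ρ u : ℝ) (hu : |u| ≤ 2*ρ) :
    ∃ j : Fin 3, |u - ![-(4*ρ/3), 0, 4*ρ/3] j| ≤ 2*ρ/3 := by
  rw [abs_le] at hu
  by_cases h1 : u ≤ -(2*ρ/3)
  · exact ⟨0, by rw [abs_le]; constructor <;> simp <;> linarith⟩
  by_cases h2 : u ≤ 2*ρ/3
  · exact ⟨1, by rw [abs_le]; constructor <;> simp <;> linarith⟩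
  · exact ⟨2, by rw [abs_le]; constructor <;> simp <;> linarith⟩

lemma coord_le_dist (x y : E2) (i : Fin 2) : |x i - y i| ≤ dist x y := by
  rw [EuclideanSpace.dist_eq]
  rw [show |x i - y i| = Real.sqrt ((x i - y i)^2) from (Real.sqrt_sq_eq_abs _).symm]
  apply Real.sqrt_le_sqrt
  rw [Fin.sum_univ_two]
  fin_cases i <;> simp [Real.dist_eq, sq_abs] <;> positivity

lemma cover9 (c : E2) (ρ : ℝ) (hρ : 0 < ρ) :
    ∃ g : Fin 3 × Fin 3 → E2, ∀ x ∈ closedBall c (2*ρ),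
      ∃ k, x ∈ closedBall (g k) (2 * Real.sqrt 2 / 3 * ρ) := by
  refine ⟨fun k => (WithLp.toLp 2 (fun i : Fin 2 => if i = 0 then c 0 + ![-(4*ρ/3), 0, 4*ρ/3] k.1
      else c 1 + ![-(4*ρ/3), 0, 4*ρ/3] k.2) : EuclideanSpace ℝ (Fin 2)), fun x hx => ?_⟩
  rw [mem_closedBall] at hx
  obtain ⟨j0, hj0⟩ := grid1 ρ (x 0 - c 0) (le_trans (coord_le_dist x c 0) hx)
  obtain ⟨j1, hj1⟩ := grid1 ρ (x 1 - c 1) (le_trans (coord_le_dist x c 1) hx)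
  refine ⟨(j0, j1), ?_⟩
  rw [mem_closedBall, EuclideanSpace.dist_eq]
  rw [show 2 * Real.sqrt 2 / 3 * ρ = Real.sqrt ((2 * Real.sqrt 2 / 3 * ρ)^2) from
    (Real.sqrt_sq (by positivity)).symm]
  apply Real.sqrt_le_sqrt
  rw [Fin.sum_univ_two]
  have e2 : (Real.sqrt 2)^2 = 2 := Real.sq_sqrt (by norm_num)
  have h0 : dist (x 0) (c 0 + ![-(4*ρ/3), 0, 4*ρ/3] j0) ^ 2 ≤ (2*ρ/3)^2 := by
    rw [Real.dist_eq]
    refine pow_le_pow_left₀ (abs_nonneg _) ?_ 2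
    rw [show x 0 - (c 0 + ![-(4*ρ/3), 0, 4*ρ/3] j0)
      = (x 0 - c 0) - ![-(4*ρ/3), 0, 4*ρ/3] j0 by ring]
    exact hj0
  have h1 : dist (x 1) (c 1 + ![-(4*ρ/3), 0, 4*ρ/3] j1) ^ 2 ≤ (2*ρ/3)^2 := by
    rw [Real.dist_eq]
    refine pow_le_pow_left₀ (abs_nonneg _) ?_ 2
    rw [show x 1 - (c 1 + ![-(4*ρ/3), 0, 4*ρ/3] j1)
      = (x 1 - c 1) - ![-(4*ρ/3), 0, 4*ρ/3] j1 by ring]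
    exact hj1
  have hkey : dist (x 0) ((WithLp.toLp 2 (fun i : Fin 2 => if i = 0 then c 0 + ![-(4*ρ/3), 0, 4*ρ/3] j0
      else c 1 + ![-(4*ρ/3), 0, 4*ρ/3] j1) : EuclideanSpace ℝ (Fin 2)) 0) ^ 2
      + dist (x 1) ((WithLp.toLp 2 (fun i : Fin 2 => if i = 0 then c 0 + ![-(4*ρ/3), 0, 4*ρ/3] j0
      else c 1 + ![-(4*ρ/3), 0, 4*ρ/3] j1) : EuclideanSpace ℝ (Fin 2)) 1) ^ 2
      ≤ (2*ρ/3)^2 + (2*ρ/3)^2 := by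
    simp only [show ((1:Fin 2) = 0) = False by simp, if_true, if_false, eq_self_iff_true]
    exact add_le_add h0 h1
  refine le_trans hkey ?_
  nlinarith [hρ.le]

lemma exists_good_ball (n m : ℕ) (p : Fin n → E2) (hp : Function.Injective p)
    (hm2 : 2 ≤ m) (hmn : m ≤ n) :
    ∃ (c : E2) (ρ : ℝ), 0 < ρ ∧
      m ≤ (Finset.univ.filter (fun i => p i ∈ closedBall c ρ)).card ∧
      ∀ c' : E2, (Finset.univ.filter
        (fun i => p i ∈ closedBall c' (2 * Real.sqrt 2 / 3 * ρ))).card < m := by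
  have hq0 : 0 < 2 * Real.sqrt 2 / 3 := by positivity
  have hq1 : 2 * Real.sqrt 2 / 3 < 1 := q_lt_one
  have hn1 : 1 ≤ n := le_trans (le_trans one_le_two hm2) hmn
  have hn2 : 2 ≤ n := le_trans hm2 hmn
  set A : Set ℝ := {ρ | 0 ≤ ρ ∧ ∃ c : E2,
    m ≤ (Finset.univ.filter (fun i => p i ∈ closedBall c ρ)).card} with hA
  have hAne : A.Nonempty := by
    set c0 : E2 := p ⟨0, hn1⟩ with hc0
    have hne : (Finset.univ.image fun i => dist (p i) c0).Nonempty :=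
      ⟨dist (p ⟨0, hn1⟩) c0, Finset.mem_image_of_mem _ (Finset.mem_univ _)⟩
    set R : ℝ := (Finset.univ.image fun i => dist (p i) c0).max' hne with hRdef
    have hRall : ∀ i, dist (p i) c0 ≤ R := fun i => by
      rw [hRdef]
      exact Finset.le_max' (Finset.univ.image fun j => dist (p j) c0) (dist (p i) c0)
        (Finset.mem_image_of_mem (fun j => dist (p j) c0) (Finset.mem_univ i))
    have hR0 : 0 ≤ R := le_trans dist_nonneg (hRall ⟨0, hn1⟩)
    refine ⟨R, hR0, c0, ?_⟩
    have hfil : (Finset.univ.filter fun i => p i ∈ closedBall c0 R) = Finset.univ :=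
      Finset.filter_true_of_mem fun i _ => hRall i
    rw [hfil, Finset.card_univ, Fintype.card_fin]; exact hmn
  have hAbdd : BddBelow A := ⟨0, fun x hx => hx.1⟩
  have hsep : ∃ δ : ℝ, 0 < δ ∧ ∀ i j : Fin n, i ≠ j → δ ≤ dist (p i) (p j) := by
    have hne : (Finset.univ.offDiag (α := Fin n)).Nonempty := by
      refine ⟨(⟨0, by omega⟩, ⟨1, by omega⟩), ?_⟩
      rw [Finset.mem_offDiag]
      refine ⟨Finset.mem_univ _, Finset.mem_univ _, ?_⟩
      simp [Fin.ext_iff]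
    obtain ⟨q0, hq0mem, hq0min⟩ := Finset.exists_min_image Finset.univ.offDiag
      (fun q : Fin n × Fin n => dist (p q.1) (p q.2)) hne
    rw [Finset.mem_offDiag] at hq0mem
    refine ⟨dist (p q0.1) (p q0.2), dist_pos.mpr fun he => hq0mem.2.2 (hp he),
      fun i j hij => hq0min (i, j) ?_⟩
    rw [Finset.mem_offDiag]
    exact ⟨Finset.mem_univ _, Finset.mem_univ _, hij⟩
  obtain ⟨δ, hδpos, hδle⟩ := hsep
  have hlb : ∀ ρ ∈ A, δ/2 ≤ ρ := by
    rintro ρ ⟨hρ0, c, hc⟩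
    have h2 : 1 < (Finset.univ.filter (fun i => p i ∈ closedBall c ρ)).card :=
      lt_of_lt_of_le (by omega) hc
    obtain ⟨i, hi, j, hj, hij⟩ := Finset.one_lt_card.mp h2
    rw [Finset.mem_filter, mem_closedBall] at hi hj
    have h3 : dist (p i) (p j) ≤ 2 * ρ := by
      calc dist (p i) (p j) ≤ dist (p i) c + dist c (p j) := dist_triangle _ _ _
      _ ≤ ρ + ρ := add_le_add hi.2 (by rw [dist_comm]; exact hj.2)
      _ = 2 * ρ := by ring
    have := hδle i j hij
    linarith
  set ρ₀ := sInf A with hρ₀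
  have hρ₀pos : 0 < ρ₀ := lt_of_lt_of_le (by linarith) (le_csInf hAne hlb)
  obtain ⟨ρ, hρA, hρlt⟩ := exists_lt_of_csInf_lt hAne
    (show sInf A < ρ₀ / (2 * Real.sqrt 2 / 3) by
      rw [← hρ₀, lt_div_iff₀ hq0]; nlinarith)
  have hρpos : 0 < ρ := lt_of_lt_of_le hρ₀pos (csInf_le hAbdd hρA)
  obtain ⟨hρ0, c, hc⟩ := hρA
  refine ⟨c, ρ, hρpos, hc, fun c' => ?_⟩
  by_contra hcon
  push_neg at hcon
  have hmem : 2 * Real.sqrt 2 / 3 * ρ ∈ A := ⟨by positivity, c', hcon⟩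
  have hle := csInf_le hAbdd hmem
  rw [← hρ₀] at hle
  have h5 : ρ * (2 * Real.sqrt 2 / 3) < ρ₀ := (lt_div_iff₀ hq0).mp hρlt
  nlinarith

lemma sum_sq_le_twelve (n : ℕ) (ρ : ℝ) (hρ : 0 < ρ) (w : Fin n → ℝ) (hw0 : ∀ i, 0 ≤ w i)
    (c : E2) (y : Fin n → E2)
    (hsub : ∀ i, 0 < w i → ball (y i) (w i / 2) ⊆ closedBall c (2*ρ) \ ball c ρ)
    (hdisj : Pairwise fun i j => Disjoint (ball (y i) (w i / 2)) (ball (y j) (w j / 2))) :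
    ∑ i, (w i)^2 ≤ 12 * ρ^2 := by
  set V := volume (ball (0:E2) 1) with hV
  have hV0 : V ≠ 0 := (measure_ball_pos _ _ one_pos).ne'
  have hVtop : V ≠ ⊤ := measure_ball_lt_top.ne
  set F := Finset.univ.filter (fun i => 0 < w i) with hF
  have hball : ∀ i, volume (ball (y i) (w i / 2)) = ENNReal.ofReal ((w i / 2)^2) * V := by
    intro i
    rcases le_or_gt (w i) 0 with h | h
    · rw [ball_eq_empty.mpr (by linarith), measure_empty, ENNReal.ofReal_eq_zero.mpr ?_ ]
      · rw [zero_mul]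
      · nlinarith [hw0 i]
    · rw [Measure.addHaar_ball volume (y i) (by positivity : (0:ℝ) ≤ w i / 2), e2_finrank]
  have hannulus : volume (closedBall c (2*ρ) \ ball c ρ) = ENNReal.ofReal (3 * ρ^2) * V := by
    have h1 : volume (closedBall c (2*ρ)) = ENNReal.ofReal ((2*ρ)^2) * V := by
      rw [Measure.addHaar_closedBall volume c (by positivity), e2_finrank]
    have h2 : volume (ball c ρ) = ENNReal.ofReal (ρ^2) * V := by
      rw [Measure.addHaar_ball volume c hρ.le, e2_finrank]
    rw [measure_diff (ball_subset_closedBall.trans (closedBall_subset_closedBall (by linarith)))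
      measurableSet_ball.nullMeasurableSet
      (by rw [h2]; exact ENNReal.mul_ne_top ENNReal.ofReal_ne_top hVtop), h1, h2]
    rw [show ((2*ρ)^2 : ℝ) = 3*ρ^2 + ρ^2 by ring,
      ENNReal.ofReal_add (by positivity) (by positivity), add_mul]
    exact ENNReal.add_sub_cancel_right (ENNReal.mul_ne_top ENNReal.ofReal_ne_top hVtop)
  have hunion : ∑ i ∈ F, volume (ball (y i) (w i / 2)) ≤ ENNReal.ofReal (3 * ρ^2) * V := by
    rw [← hannulus, ← measure_biUnion_finset ?_ (fun i _ => measurableSet_ball)]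
    · refine measure_mono (Set.iUnion₂_subset fun i hi => hsub i ?_)
      exact (Finset.mem_filter.mp hi).2
    · intro i hi j hj hij
      exact hdisj hij
  rw [Finset.sum_congr rfl (fun i _ => hball i), ← Finset.sum_mul] at hunion
  have hsum : ∑ i ∈ F, ENNReal.ofReal ((w i / 2)^2) ≤ ENNReal.ofReal (3 * ρ^2) :=
    (ENNReal.mul_le_mul_iff_left hV0 hVtop).mp hunion
  rw [← ENNReal.ofReal_sum_of_nonneg (fun i _ => by positivity)] at hsum
  have hreal : ∑ i ∈ F, (w i / 2)^2 ≤ 3 * ρ^2 :=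
    (ENNReal.ofReal_le_ofReal_iff (by positivity)).mp hsum
  have hext : ∑ i, (w i)^2 = ∑ i ∈ F, (w i)^2 := by
    refine (Finset.sum_filter_of_ne fun i _ hne => ?_).symm
    rcases (hw0 i).lt_or_eq with h | h
    · exact h
    · exact absurd (by rw [← h]; ring) hne
  rw [hext]
  calc ∑ i ∈ F, (w i)^2 = 4 * ∑ i ∈ F, (w i / 2)^2 := by
        rw [Finset.mul_sum]; exact Finset.sum_congr rfl fun i _ => by ring
  _ ≤ 4 * (3 * ρ^2) := by linarith
  _ = 12 * ρ^2 := by ring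

lemma exists_small_fiber (n : ℕ) (a b : Fin n → ℝ) (ρ K : ℝ) (hρ : 0 < ρ)
    (hsum : ∑ i, max (b i - a i) 0 < K * ρ) :
    ∃ s ∈ Set.Icc ρ (2*ρ),
      ((Finset.univ.filter (fun i => a i ≤ s ∧ s ≤ b i)).card : ℝ) ≤ K := by
  by_contra hcon
  push_neg at hcon
  set f : ℝ → ℝ := fun s => ∑ i, Set.indicator (Set.Icc (a i) (b i)) (fun _ => (1:ℝ)) s with hf
  have hfcard : ∀ s, f s = ((Finset.univ.filter (fun i => a i ≤ s ∧ s ≤ b i)).card : ℝ) := by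
    intro s
    rw [hf, Finset.card_filter]
    push_cast
    refine Finset.sum_congr rfl fun i _ => ?_
    by_cases h : a i ≤ s ∧ s ≤ b i <;> simp [Set.indicator_apply, Set.mem_Icc, h]
  have hint_each : ∀ i : Fin n,
      Integrable (Set.indicator (Set.Icc (a i) (b i)) (fun _ => (1:ℝ))) := by
    intro i
    rw [integrable_indicator_iff measurableSet_Icc]
    exact integrableOn_const measure_Icc_lt_top.ne
  have hf_int : Integrable f := integrable_finset_sum _ (fun i _ => hint_each i)
  have hlow : K * ρ ≤ ∫ s in Set.Icc ρ (2*ρ), f s := by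
    have h1 : ∫ _ in Set.Icc ρ (2*ρ), K ≤ ∫ s in Set.Icc ρ (2*ρ), f s := by
      apply setIntegral_mono_on (integrableOn_const measure_Icc_lt_top.ne)
        hf_int.integrableOn measurableSet_Icc
      intro s hs; rw [hfcard s]; exact (hcon s hs).le
    rwa [setIntegral_const, Real.volume_real_Icc_of_le (by linarith), smul_eq_mul,
      show (2*ρ - ρ) = ρ by ring, mul_comm] at h1
  have hup : ∫ s in Set.Icc ρ (2*ρ), f s ≤ ∑ i, max (b i - a i) 0 := by
    rw [hf, integral_finset_sum _ (fun i _ => (hint_each i).integrableOn)]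
    refine Finset.sum_le_sum fun i _ => ?_
    rw [setIntegral_indicator measurableSet_Icc, setIntegral_const, smul_eq_mul, mul_one]
    calc (volume (Set.Icc ρ (2*ρ) ∩ Set.Icc (a i) (b i))).toReal
        ≤ (volume (Set.Icc (a i) (b i))).toReal :=
          ENNReal.toReal_mono measure_Icc_lt_top.ne (measure_mono Set.inter_subset_right)
      _ ≤ max (b i - a i) 0 := by rw [Real.volume_Icc, ENNReal.toReal_ofReal']
  linarith

lemma exists_subball (p c : E2) (rr ρ aa bb : ℝ) (hρ : 0 < ρ) (hab : aa < bb)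
    (haρ : ρ ≤ aa) (hb2ρ : bb ≤ 2*ρ) (har : dist p c - rr ≤ aa) (hbr : bb ≤ dist p c + rr) :
    ∃ y : E2, ball y ((bb - aa)/2) ⊆ ball p rr ∧
      ball y ((bb - aa)/2) ⊆ closedBall c (2*ρ) \ ball c ρ := by
  set dd := dist p c with hdd
  set mid := (aa + bb)/2 with hmid
  set u : E2 := if h : dd = 0 then EuclideanSpace.single 0 1 else (dd)⁻¹ • (p - c) with hu
  have hdd0 : 0 ≤ dd := dist_nonneg
  have hnu : ‖u‖ = 1 := by
    rw [hu]
    split_ifs with h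
    · simp [EuclideanSpace.norm_single]
    · rw [norm_smul, norm_inv, Real.norm_eq_abs, abs_of_nonneg hdd0, ← dist_eq_norm, ← hdd]
      exact inv_mul_cancel₀ h
  have hpc : p = c + dd • u := by
    rw [hu]
    split_ifs with h
    · have : p = c := by rwa [← dist_eq_zero, ← hdd]
      rw [this, h]; simp
    · rw [smul_smul, mul_inv_cancel₀ h, one_smul]; module
  set y : E2 := c + mid • u with hy
  have hyp : dist y p = |mid - dd| := by
    rw [hy, hpc, dist_eq_norm]
    have : c + mid • u - (c + dd • u) = (mid - dd) • u := by
      rw [sub_smul]; abel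
    rw [this, norm_smul, Real.norm_eq_abs, hnu, mul_one]
  have hyc : dist y c = mid := by
    rw [hy, dist_eq_norm]
    have : c + mid • u - c = mid • u := by abel
    rw [this, norm_smul, Real.norm_eq_abs, hnu, mul_one, abs_of_nonneg (by rw [hmid]; linarith)]
  have hmd : |mid - dd| ≤ rr - (bb - aa)/2 := by
    rw [abs_le]
    constructor <;> [skip; skip] <;> rw [hmid] <;> linarith
  refine ⟨y, fun z hz => ?_, fun z hz => ?_⟩
  · rw [mem_ball] at hz ⊢
    calc dist z p ≤ dist z y + dist y p := dist_triangle _ _ _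
      _ < (bb - aa)/2 + (rr - (bb-aa)/2) := add_lt_add_of_lt_of_le hz (hyp ▸ hmd)
      _ = rr := by ring
  · rw [mem_ball] at hz
    constructor
    · rw [mem_closedBall]
      calc dist z c ≤ dist z y + dist y c := dist_triangle _ _ _
        _ ≤ (bb - aa)/2 + mid := by linarith
        _ ≤ 2*ρ := by rw [hmid]; linarith
    · rw [mem_ball, not_lt]
      have h1 : dist y c ≤ dist y z + dist z c := dist_triangle _ _ _
      rw [hyc] at h1
      rw [dist_comm y z] at h1
      have h2 : mid - (bb-aa)/2 ≤ dist z c := by linarith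
      calc ρ ≤ aa := haρ
        _ = mid - (bb-aa)/2 := by rw [hmid]; ring
        _ ≤ dist z c := h2

lemma walk_invariant {V : Type*} {G : SimpleGraph V} (P : V → Prop)
    (h : ∀ a b, G.Adj a b → P a → P b) :
    ∀ {u v : V}, G.Walk u v → P u → P v := by
  intro u v wlk
  induction wlk with
  | nil => exact id
  | cons hadj _ ih => exact fun hu => ih (h _ _ hadj hu)

lemma ncard_setOf_eq {α : Type*} [Fintype α] (Q : α → Prop) [DecidablePred Q] :
    {x | Q x}.ncard = (Finset.univ.filter Q).card := by
  rw [← Set.ncard_coe_finset]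
  congr 1
  ext x
  simp

end PlanarSepAux

open Metric Real Finset MeasureTheory PlanarSepAux
open scoped Classical

/-- Planar separator theorem for disk-packing graphs: the intersection graph of `n ≥ 1`
pairwise interior-disjoint closed disks of positive radii in the plane has a separator
`S` of at most `4 √n` vertices whose removal leaves connected components with at most
`(9/10) n` vertices each. -/
theorem planar_separator_disk_packing
    (n : ℕ) (hn : 1 ≤ n) (p : Fin n → EuclideanSpace ℝ (Fin 2)) (r : Fin n → ℝ)
    (hr : ∀ i, 0 < r i)
    (hdisj : Pairwise fun i j =>
      Disjoint (Metric.ball (p i) (r i)) (Metric.ball (p j) (r j)))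
    (G : SimpleGraph (Fin n))
    (hG : ∀ i j, G.Adj i j ↔ i ≠ j ∧
      (Metric.closedBall (p i) (r i) ∩ Metric.closedBall (p j) (r j)).Nonempty) :
    ∃ S : Set (Fin n), (S.ncard : ℝ) ≤ 4 * Real.sqrt n ∧
      ∀ C : (G.induce Sᶜ).ConnectedComponent,
        (({v : ↥Sᶜ | (G.induce Sᶜ).connectedComponentMk v = C}).ncard : ℝ) ≤
          (9 / 10 : ℝ) * n := by
  classical
  by_cases hsmall : n ≤ 16
  · refine ⟨Set.univ, ?_, ?_⟩
    · rw [Set.ncard_univ, Nat.card_eq_fintype_card, Fintype.card_fin]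
      have h4 : Real.sqrt n ≤ 4 := by
        rw [show (4:ℝ) = Real.sqrt 16 by
          rw [show (16:ℝ) = 4^2 by norm_num, Real.sqrt_sq (by norm_num)]]
        exact Real.sqrt_le_sqrt (by exact_mod_cast hsmall)
      nlinarith [Real.sq_sqrt (Nat.cast_nonneg (α := ℝ) n), Real.sqrt_nonneg (n:ℝ)]
    · intro C
      have hie : IsEmpty ↥((Set.univ : Set (Fin n))ᶜ) := ⟨fun v => by simpa using v.2⟩
      have he : {v : ↥((Set.univ : Set (Fin n))ᶜ) |
          (G.induce (Set.univ : Set (Fin n))ᶜ).connectedComponentMk v = C} = ∅ :=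
        Set.eq_empty_of_isEmpty _
      rw [he, Set.ncard_empty]
      push_cast
      positivity
  push_neg at hsmall
  have hn17 : 17 ≤ n := hsmall
  -- distinct centers
  have hpinj : Function.Injective p := by
    intro i j hij
    by_contra hne
    exact Set.disjoint_left.mp (hdisj hne) (mem_ball_self (hr i))
      (by rw [mem_ball, hij, dist_self]; exact hr j)
  set m : ℕ := n / 10 + 1 with hm
  have hm2 : 2 ≤ m := by omega
  have hmn : m ≤ n := by omega
  obtain ⟨c, ρ, hρpos, hcount, hsmallball⟩ := exists_good_ball n m p hpinj hm2 hmn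
  set d : Fin n → ℝ := fun i => dist (p i) c with hd
  set a : Fin n → ℝ := fun i => max ρ (d i - r i) with ha
  set b : Fin n → ℝ := fun i => min (2*ρ) (d i + r i) with hb
  set w : Fin n → ℝ := fun i => max (b i - a i) 0 with hw
  have hw0 : ∀ i, 0 ≤ w i := fun i => le_max_right _ _
  -- construct witness subballs
  have hwit : ∀ i, 0 < w i → ∃ y : E2, ball y (w i / 2) ⊆ ball (p i) (r i) ∧
      ball y (w i / 2) ⊆ closedBall c (2*ρ) \ ball c ρ := by
    intro i hi
    have hab : a i < b i := by
      by_contra hcon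
      push_neg at hcon
      have : w i = 0 := by
        rw [hw]; simp only [max_eq_right_iff]; linarith
      linarith
    have hwe : w i = b i - a i := by
      rw [hw]; exact max_eq_left (by linarith)
    rw [hwe]
    exact exists_subball (p i) c (r i) ρ (a i) (b i) hρpos hab (le_max_left _ _)
      (min_le_left _ _) (le_max_right _ _) (min_le_right _ _)
  set Y : Fin n → E2 := fun i => if h : 0 < w i then (hwit i h).choose else c with hY
  have hYsub : ∀ i, 0 < w i → ball (Y i) (w i / 2) ⊆ ball (p i) (r i) ∧
      ball (Y i) (w i / 2) ⊆ closedBall c (2*ρ) \ ball c ρ := by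
    intro i h
    rw [hY]
    simp only [dif_pos h]
    exact (hwit i h).choose_spec
  have hYdisj : Pairwise fun i j => Disjoint (ball (Y i) (w i / 2)) (ball (Y j) (w j / 2)) := by
    intro i j hij
    by_cases hi : 0 < w i
    · by_cases hj : 0 < w j
      · exact (hdisj hij).mono (hYsub i hi).1 (hYsub j hj).1
      · rw [ball_eq_empty.mpr (show w j / 2 ≤ 0 by push_neg at hj; linarith)]
        exact Set.disjoint_empty _
    · rw [ball_eq_empty.mpr (show w i / 2 ≤ 0 by push_neg at hi; linarith)]
      exact Set.empty_disjoint _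
  have hsq : ∑ i, (w i)^2 ≤ 12 * ρ^2 :=
    sum_sq_le_twelve n ρ hρpos w hw0 c Y (fun i h => (hYsub i h).2) hYdisj
  -- sum of widths is small
  have hnR : (0:ℝ) < n := by exact_mod_cast Nat.lt_of_lt_of_le Nat.zero_lt_one hn
  have hlt : ∑ i, w i < 4 * Real.sqrt n * ρ := by
    have hcs : (∑ i, w i)^2 ≤ (n : ℝ) * ∑ i, (w i)^2 := by
      have h := sq_sum_le_card_mul_sum_sq (s := (Finset.univ : Finset (Fin n))) (f := w)
      simpa using h
    have h1 : (∑ i, w i)^2 < (4 * Real.sqrt n * ρ)^2 := by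
      have h2 : (4 * Real.sqrt n * ρ)^2 = 16 * n * ρ^2 := by
        rw [mul_pow, mul_pow, Real.sq_sqrt (le_of_lt hnR)]; ring
      rw [h2]
      nlinarith [mul_le_mul_of_nonneg_left hsq hnR.le, mul_pos hnR (mul_pos hρpos hρpos)]
    exact lt_of_pow_lt_pow_left₀ 2 (by positivity) h1
  obtain ⟨s, hsIcc, hscard⟩ := exists_small_fiber n a b ρ (4 * Real.sqrt n) hρpos hlt
  obtain ⟨hs1, hs2⟩ := hsIcc
  set S : Set (Fin n) := {i | a i ≤ s ∧ s ≤ b i} with hS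
  have hSncard : S.ncard = (Finset.univ.filter (fun i => a i ≤ s ∧ s ≤ b i)).card :=
    ncard_setOf_eq _
  refine ⟨S, by rw [hSncard]; exact hscard, ?_⟩
  -- components
  have hadjP : ∀ x y : ↥Sᶜ, (G.induce Sᶜ).Adj x y →
      (d x.1 + r x.1 < s) → (d y.1 + r y.1 < s) := by
    intro x y hxy hPx
    have hGxy : G.Adj x.1 y.1 := hxy
    obtain ⟨hne, z, hz1, hz2⟩ := (hG _ _).mp hGxy
    by_contra hPy
    have hside : ¬(a y.1 ≤ s ∧ s ≤ b y.1) := y.2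
    have houty : s < d y.1 - r y.1 := by
      by_contra hcon2
      push_neg at hcon2
      exact hside ⟨max_le hs1 (by linarith), le_min hs2 (by push_neg at hPy; linarith)⟩
    rw [mem_closedBall] at hz1 hz2
    have hzc1 : dist z c < s := by
      calc dist z c ≤ dist z (p x.1) + dist (p x.1) c := dist_triangle _ _ _
        _ ≤ r x.1 + d x.1 := add_le_add hz1 le_rfl
        _ < s := by linarith [hPx]
    have hzc2 : s < dist z c := by
      have h4 : d y.1 ≤ dist (p y.1) z + dist z c := dist_triangle _ _ _
      rw [dist_comm (p y.1) z] at h4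
      linarith [hz2]
    linarith
  have hadjPn : ∀ x y : ↥Sᶜ, (G.induce Sᶜ).Adj x y →
      ¬(d x.1 + r x.1 < s) → ¬(d y.1 + r y.1 < s) :=
    fun x y hxy hnx hy => hnx (hadjP y x hxy.symm hy)
  have hcover_card : (Finset.univ.filter (fun i => p i ∈ closedBall c (2*ρ))).card
      ≤ 9 * (m - 1) := by
    obtain ⟨g, hg⟩ := cover9 c ρ hρpos
    have hsub : Finset.univ.filter (fun i => p i ∈ closedBall c (2*ρ)) ⊆
        (Finset.univ : Finset (Fin 3 × Fin 3)).biUnion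
          (fun k => Finset.univ.filter fun i =>
            p i ∈ closedBall (g k) (2 * Real.sqrt 2 / 3 * ρ)) := by
      intro i hi
      rw [Finset.mem_filter] at hi
      obtain ⟨k, hk⟩ := hg _ hi.2
      exact Finset.mem_biUnion.mpr ⟨k, Finset.mem_univ _,
        Finset.mem_filter.mpr ⟨Finset.mem_univ _, hk⟩⟩
    calc (Finset.univ.filter (fun i => p i ∈ closedBall c (2*ρ))).card
        ≤ ((Finset.univ : Finset (Fin 3 × Fin 3)).biUnion
          (fun k => Finset.univ.filter fun i =>
            p i ∈ closedBall (g k) (2 * Real.sqrt 2 / 3 * ρ))).card :=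
          Finset.card_le_card hsub
      _ ≤ ∑ k : Fin 3 × Fin 3, (Finset.univ.filter fun i =>
            p i ∈ closedBall (g k) (2 * Real.sqrt 2 / 3 * ρ)).card :=
          Finset.card_biUnion_le
      _ ≤ ∑ _k : Fin 3 × Fin 3, (m - 1) :=
          Finset.sum_le_sum fun k _ => by
            have := hsmallball (g k); omega
      _ ≤ 9 * (m - 1) := by
          rw [Finset.sum_const, Finset.card_univ]
          simp
  have houter_card : (Finset.univ.filter (fun i => ¬(p i ∈ closedBall c ρ))).card ≤ n - m := by
    have hpart := Finset.card_filter_add_card_filter_not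
      (s := (Finset.univ : Finset (Fin n))) (p := fun i => p i ∈ closedBall c ρ)
    rw [Finset.card_univ, Fintype.card_fin] at hpart
    have hcount' := hcount
    omega
  have hkey : ∀ U : Set ↥Sᶜ, (∀ v u : ↥Sᶜ, v ∈ U → u ∈ U → (G.induce Sᶜ).Reachable v u) →
      ((U.ncard : ℝ) ≤ (9:ℝ)/10 * n) := by
    intro U hU
    rcases Set.eq_empty_or_nonempty U with hUe | ⟨v₀, hv₀⟩
    · rw [hUe, Set.ncard_empty]
      push_cast
      positivity
    have hval : U.ncard = (Subtype.val '' U).ncard :=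
      (Set.ncard_image_of_injective U Subtype.val_injective).symm
    by_cases hPv₀ : d v₀.1 + r v₀.1 < s
    · have hUsub : Subtype.val '' U ⊆ {i : Fin n | p i ∈ closedBall c (2*ρ)} := by
        rintro _ ⟨v, hv, rfl⟩
        have hPv : d v.1 + r v.1 < s :=
          walk_invariant (fun x : ↥Sᶜ => d x.1 + r x.1 < s) hadjP
            (hU v₀ v hv₀ hv).some hPv₀
        have hd2 : d v.1 < 2*ρ := by
          have := hr v.1
          linarith
        exact mem_closedBall.mpr (le_of_lt hd2)
      have h1 : (Subtype.val '' U).ncard ≤ ({i : Fin n | p i ∈ closedBall c (2*ρ)}).ncard :=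
        Set.ncard_le_ncard hUsub (Set.toFinite _)
      rw [ncard_setOf_eq] at h1
      have h2 : U.ncard ≤ 9 * (m - 1) := by
        rw [hval]; exact le_trans h1 hcover_card
      have h3 : ((9 * (m - 1) : ℕ) : ℝ) ≤ (9:ℝ)/10 * n := by
        have hm1 : (m - 1 : ℕ) = n / 10 := by omega
        rw [hm1]
        push_cast
        have hcast := Nat.cast_div_le (m := n) (n := 10) (α := ℝ)
        push_cast at hcast
        linarith
      calc (U.ncard : ℝ) ≤ ((9 * (m - 1) : ℕ) : ℝ) := by exact_mod_cast h2
        _ ≤ (9:ℝ)/10 * n := h3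
    · have hUsub : Subtype.val '' U ⊆ {i : Fin n | ¬(p i ∈ closedBall c ρ)} := by
        rintro _ ⟨v, hv, rfl⟩
        have hPv : ¬(d v.1 + r v.1 < s) :=
          walk_invariant (fun x : ↥Sᶜ => ¬(d x.1 + r x.1 < s)) hadjPn
            (hU v₀ v hv₀ hv).some hPv₀
        have hside : ¬(a v.1 ≤ s ∧ s ≤ b v.1) := v.2
        have hout : s < d v.1 - r v.1 := by
          by_contra hcon2
          push_neg at hcon2
          exact hside ⟨max_le hs1 (by linarith), le_min hs2 (by push_neg at hPv; linarith)⟩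
        intro hmem
        have hdvρ : d v.1 ≤ ρ := mem_closedBall.mp hmem
        have := hr v.1
        linarith
      have h1 : (Subtype.val '' U).ncard ≤ ({i : Fin n | ¬(p i ∈ closedBall c ρ)}).ncard :=
        Set.ncard_le_ncard hUsub (Set.toFinite _)
      rw [ncard_setOf_eq] at h1
      have h2 : U.ncard ≤ n - m := by
        rw [hval]; exact le_trans h1 houter_card
      have h3 : ((n - m : ℕ) : ℝ) ≤ (9:ℝ)/10 * n := by
        rw [Nat.cast_sub hmn]
        have h10 : (n : ℝ) ≤ 10 * m := by
          have h10' : n ≤ 10 * m := by omega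
          exact_mod_cast h10'
        linarith
      calc (U.ncard : ℝ) ≤ ((n - m : ℕ) : ℝ) := by exact_mod_cast h2
        _ ≤ (9:ℝ)/10 * n := h3
  intro C
  exact hkey _ (fun v u hv hu =>
    SimpleGraph.ConnectedComponent.exact (hv.trans hu.symm))
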